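/- Let ℓ ≥ 4 and r ≥ 1 be integers, let Δ > 0, and let f_1, …, f_k ∈ [0,1) satisfy d_w(f_j, f_{j'}) ≥ Δ for all j ≠ j'. Let x ∈ [0,1) and suppose min_{1 ≤ j ≤ k} d_w(x, f_j) ≥ 1/ℓ. Then Σ_{j=1}^k K_ℓ(x − f_j)^r ≤ 2 · 4^{−r} + π²/(ℓ^{2r} Δ^{2r}). -/

import Mathlib

noncomputable def ni (c : ℝ) : ℝ := |c - round c|

lemma ni_nonneg (c : ℝ) : 0 ≤ ni c := abs_nonneg _

lemma ni_le (c : ℝ) (n : ℤ) : ni c ≤ |c - n| := round_le c n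

lemma ni_le_abs (c : ℝ) : ni c ≤ |c| := by simpa using ni_le c 0

lemma ni_add_int (c : ℝ) (n : ℤ) : ni (c + n) = ni c := by
  unfold ni
  rw [round_add_intCast]
  push_cast
  ring_nf

noncomputable def dw (f g : ℝ) : ℝ := ⨅ t : ℤ, |f - g + (t : ℝ)|
lemma dw_eq_ni (f g : ℝ) : dw f g = ni (f - g) := by
  unfold dw
  apply le_antisymm
  · have := ciInf_le (f := fun t : ℤ => |f - g + (t : ℝ)|)
      (c := -round (f - g)) ⟨0, by rintro y ⟨t, rfl⟩; positivity⟩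
    simpa [ni, sub_eq_add_neg] using this
  · apply le_ciInf
    intro t
    have := ni_le (f - g) (-t)
    simpa [sub_eq_add_neg] using this




-- Jordan: 2u ≤ sin(πu) for u ∈ [0,1/2]
lemma two_mul_le_sin {u : ℝ} (h0 : 0 ≤ u) (h1 : u ≤ 1/2) : 2*u ≤ Real.sin (Real.pi * u) := by
  have := Real.le_sin_mul (x := 2*u) (by linarith) (by linarith)
  have e : Real.pi / 2 * (2*u) = Real.pi * u := by ring
  rwa [e] at this

-- |sin(πx)| ≥ 2 ni x
lemma sin_ge_ni (x : ℝ) : 2 * ni x ≤ |Real.sin (Real.pi * x)| := by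
  set n := round x with hn
  set w := x - n with hw
  have hx : x = w + n := by ring
  have h1 : Real.sin (Real.pi * x) = (-1)^n * Real.sin (Real.pi * w) := by
    rw [hx]
    have : Real.pi * (w + n) = Real.pi * w + n * Real.pi := by ring
    rw [this, Real.sin_add_int_mul_pi]
  have h2 : |Real.sin (Real.pi * x)| = |Real.sin (Real.pi * w)| := by
    rw [h1, abs_mul]
    rcases Int.even_or_odd n with h | h
    · rw [h.neg_one_zpow]; simp
    · rw [h.neg_one_zpow]; simp
  rw [h2]
  have hw2 : |w| ≤ 1/2 := by simpa [hw] using abs_sub_round x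
  have : |Real.sin (Real.pi * w)| = Real.sin (Real.pi * |w|) := by
    rcases abs_cases w with ⟨h, _⟩ | ⟨h, hneg⟩
    · rw [h, abs_of_nonneg]
      apply Real.sin_nonneg_of_nonneg_of_le_pi
      · positivity
      · nlinarith [Real.pi_pos, abs_nonneg w]
    · rw [h, show Real.pi * -w = -(Real.pi * w) by ring, Real.sin_neg, abs_of_nonpos]
      apply Real.sin_nonpos_of_nonpos_of_neg_pi_le
      · nlinarith [Real.pi_pos]
      · nlinarith [Real.pi_pos, hw2, abs_nonneg w, neg_abs_le w]
  rw [this]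
  exact two_mul_le_sin (abs_nonneg w) hw2

/-- The normalized Fejér kernel of order `ℓ`:
`K_ℓ(x) = (1/ℓ²) |Σ_{j=0}^{ℓ-1} e^{2πijx}|²`. -/
noncomputable def fejer (ℓ : ℕ) (x : ℝ) : ℝ :=
  (1 / (ℓ : ℝ) ^ 2) *
    ‖(∑ j ∈ Finset.range ℓ,
      Complex.exp (2 * Real.pi * Complex.I * (j : ℂ) * (x : ℂ)))‖ ^ 2





lemma fejer_nonneg (ℓ : ℕ) (x : ℝ) : 0 ≤ fejer ℓ x := by
  unfold fejer; positivity

lemma fejer_le (ℓ : ℕ) (x : ℝ) (hx : 0 < ni x) :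
    fejer ℓ x ≤ 1 / (4 * (ℓ:ℝ)^2 * ni x ^ 2) := by
  have hπ := Real.pi_pos
  set z : ℂ := Complex.exp (2 * Real.pi * Complex.I * (x : ℂ)) with hz
  have hsum : (∑ j ∈ Finset.range ℓ,
      Complex.exp (2 * Real.pi * Complex.I * (j : ℂ) * (x : ℂ))) =
      ∑ j ∈ Finset.range ℓ, z ^ j := by
    apply Finset.sum_congr rfl
    intro j _
    rw [show (2 * (Real.pi:ℂ) * Complex.I * (j : ℂ) * (x : ℂ))
        = (j:ℂ) * (2 * Real.pi * Complex.I * (x:ℂ)) by ring, Complex.exp_nat_mul]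
  have hz1 : z ≠ 1 := by
    intro h
    rw [hz, Complex.exp_eq_one_iff] at h
    obtain ⟨n, hn⟩ := h
    have hx' : (x : ℂ) = (n : ℂ) := by
      have h2 : (2 * (Real.pi:ℂ) * Complex.I) ≠ 0 := by
        apply mul_ne_zero (mul_ne_zero two_ne_zero ?_) Complex.I_ne_zero
        exact_mod_cast Complex.ofReal_ne_zero.mpr Real.pi_ne_zero
      have : (x:ℂ) * (2 * (Real.pi:ℂ) * Complex.I) = (n:ℂ) * (2 * (Real.pi:ℂ) * Complex.I) := by
        rw [← hn]; ring
      exact mul_right_cancel₀ h2 this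
    have : x = (n : ℝ) := by exact_mod_cast hx'
    rw [this] at hx
    simp [ni] at hx
  -- |z| = 1
  have hzabs : ‖z‖ = 1 := by
    rw [hz, Complex.norm_exp]
    have : (2 * (Real.pi:ℂ) * Complex.I * (x:ℂ)).re = 0 := by
      simp [Complex.mul_re, Complex.I_re, Complex.I_im]
    rw [this, Real.exp_zero]
  -- |z - 1| = 2 |sin(πx)|
  have hsin : ‖z - 1‖ = 2 * |Real.sin (Real.pi * x)| := by
    have hzeq : z = (Real.cos (2*Real.pi*x) : ℂ) + (Real.sin (2*Real.pi*x) : ℂ) * Complex.I := by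
      rw [hz, show (2 * (Real.pi:ℂ) * Complex.I * (x:ℂ)) = ((2*Real.pi*x : ℝ) : ℂ) * Complex.I by
        push_cast; ring, Complex.exp_mul_I]
      simp [Complex.ofReal_cos, Complex.ofReal_sin]
    have hsq : (‖z - 1‖)^2 = (Real.cos (2*Real.pi*x) - 1)^2 + (Real.sin (2*Real.pi*x))^2 := by
      rw [hzeq, Complex.sq_norm]
      rw [show ((Real.cos (2*Real.pi*x) : ℂ) + (Real.sin (2*Real.pi*x) : ℂ) * Complex.I - 1)
          = ((Real.cos (2*Real.pi*x) - 1 : ℝ) : ℂ) + ((Real.sin (2*Real.pi*x) : ℝ) : ℂ) * Complex.I by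
        push_cast; ring]
      rw [Complex.normSq_add_mul_I]
    have h4 : (‖z - 1‖)^2 = (2 * |Real.sin (Real.pi * x)|)^2 := by
      rw [hsq]
      have hc := Real.cos_two_mul (Real.pi * x)
      have hs := Real.sin_sq_add_cos_sq (Real.pi * x)
      have habs : |Real.sin (Real.pi*x)|^2 = Real.sin (Real.pi*x)^2 := sq_abs _
      rw [show 2*Real.pi*x = 2*(Real.pi*x) by ring]
      nlinarith [Real.sin_sq_add_cos_sq (2*(Real.pi*x))]
    have h5 : (0:ℝ) ≤ ‖z-1‖ := norm_nonneg _
    have h6 : (0:ℝ) ≤ 2 * |Real.sin (Real.pi * x)| := by positivity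
    nlinarith
  have hsinpos : 0 < |Real.sin (Real.pi * x)| := lt_of_lt_of_le (by linarith [sin_ge_ni x]) (le_refl _)
  -- bound the geometric sum
  have hni : 0 < ni x := hx
  have hA : ‖∑ j ∈ Finset.range ℓ, z ^ j‖ ≤ 1 / (2 * ni x) := by
    rw [geom_sum_eq hz1, norm_div]
    have hnum : ‖z ^ ℓ - 1‖ ≤ 2 := by
      calc ‖z ^ ℓ - 1‖ ≤ ‖z ^ ℓ‖ + ‖(1:ℂ)‖ := by
            simpa using norm_sub_le (z ^ ℓ) 1
        _ = 2 := by rw [norm_pow, hzabs, one_pow, norm_one]; norm_num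
    have hden : 4 * ni x ≤ ‖z - 1‖ := by
      rw [hsin]; linarith [sin_ge_ni x]
    calc ‖z ^ ℓ - 1‖ / ‖z - 1‖ ≤ 2 / (4 * ni x) :=
          div_le_div₀ (by norm_num) hnum (by positivity) hden
      _ = 1 / (2 * ni x) := by rw [div_eq_div_iff (by positivity) (by positivity)]; ring
  rw [fejer, hsum]
  have hA2 : ‖∑ j ∈ Finset.range ℓ, z ^ j‖ ^ 2 ≤ (1 / (2 * ni x)) ^ 2 :=
    pow_le_pow_left₀ (norm_nonneg _) hA 2
  calc (1 / (ℓ:ℝ)^2) * ‖∑ j ∈ Finset.range ℓ, z ^ j‖ ^ 2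
      ≤ (1 / (ℓ:ℝ)^2) * (1 / (2 * ni x)) ^ 2 := by
        apply mul_le_mul_of_nonneg_left hA2 (by positivity)
    _ ≤ 1 / (4 * (ℓ:ℝ)^2 * ni x ^ 2) := by
        rcases Nat.eq_zero_or_pos ℓ with h0 | h0
        · simp [h0]
        · have : (0:ℝ) < (ℓ:ℝ) := by exact_mod_cast h0
          rw [div_pow, one_pow, mul_pow, div_mul_div_comm, one_mul]
          apply le_of_eq
          congr 1
          ring


lemma sumsq_aux : ∀ N : ℕ, (∑ n ∈ Finset.range (N+2),
    (if n = 0 then (0:ℝ) else 1/(n:ℝ)^2)) ≤ 2 - 1/(N+1) := by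
  intro N
  induction N with
  | zero => norm_num [Finset.sum_range_succ]
  | succ M ih =>
    rw [show M + 1 + 2 = (M + 2) + 1 by ring, Finset.sum_range_succ]
    have h1 : (if (M+2 : ℕ) = 0 then (0:ℝ) else 1/((M+2:ℕ):ℝ)^2) = 1/((M:ℝ)+2)^2 := by
      norm_num
    rw [h1]
    have h2 : 1/((M:ℝ)+2)^2 ≤ 1/((M:ℝ)+1) - 1/((M:ℝ)+2) := by
      rw [div_sub_div _ _ (by positivity) (by positivity)]
      rw [div_le_div_iff₀ (by positivity) (by positivity)]
      ring_nf
      nlinarith [sq_nonneg ((M:ℝ)+1)]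
    push_cast
    push_cast at ih
    have e : 1/((M:ℝ)+1+1) = 1/((M:ℝ)+2) := by ring_nf
    linarith

lemma sumsq (B : ℕ) : (∑ n ∈ Finset.range B,
    (if n = 0 then (0:ℝ) else 1/(n:ℝ)^2)) ≤ 2 := by
  match B with
  | 0 => simp
  | 1 => simp
  | (N+2) => linarith [sumsq_aux N, show (0:ℝ) < 1/((N:ℝ)+1) by positivity]

lemma key {ι : Type*} [DecidableEq ι] (L Δ : ℝ) (hL : 0 < L) (hΔ : 0 < Δ)
    (r : ℕ) (hr : 1 ≤ r) (S : Finset ι) (s : ι → ℝ) (hs : ∀ j ∈ S, 1/L ≤ s j)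
    (hsep : ∀ j ∈ S, ∀ j' ∈ S, j ≠ j' → Δ ≤ |s j - s j'|) :
    ∑ j ∈ S, (1/(4 * L^2 * s j^2))^r ≤ 1/4^r + (1/(4 * L^2 * Δ^2))^r * 2 := by
  classical
  set c : ℝ := (1/(4 * L^2 * Δ^2))^r with hc
  have hc0 : 0 ≤ c := by positivity
  set ι0 : ι → ℕ := fun j => (⌊(s j - 1/L)/Δ⌋).toNat with hι0
  set g : ℕ → ℝ := fun n => if n = 0 then 1/4^r else c * (1/(n:ℝ)^2) with hg
  have hg0 : ∀ n, 0 ≤ g n := by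
    intro n; rw [hg]; dsimp only; split <;> positivity
  have hy : ∀ j ∈ S, 0 ≤ (s j - 1/L)/Δ := by
    intro j hj
    have h1 : 0 < (1:ℝ)/L := by positivity
    have := hs j hj
    apply div_nonneg (by linarith) hΔ.le
  have hcast : ∀ j ∈ S, ((ι0 j : ℕ) : ℝ) = ((⌊(s j - 1/L)/Δ⌋ : ℤ) : ℝ) := by
    intro j hj
    have hnn : (0:ℤ) ≤ ⌊(s j - 1/L)/Δ⌋ := Int.floor_nonneg.mpr (hy j hj)
    rw [hι0]; dsimp only
    exact_mod_cast congrArg (Int.cast : ℤ → ℝ) (Int.toNat_of_nonneg hnn)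
  have hfl : ∀ j ∈ S, ((ι0 j : ℝ)) ≤ (s j - 1/L)/Δ := by
    intro j hj
    rw [hcast j hj]
    exact Int.floor_le _
  have hfl2 : ∀ j ∈ S, (s j - 1/L)/Δ < (ι0 j : ℝ) + 1 := by
    intro j hj
    rw [hcast j hj]
    exact Int.lt_floor_add_one _
  -- term bound
  have hterm : ∀ j ∈ S, (1/(4 * L^2 * s j^2))^r ≤ g (ι0 j) := by
    intro j hj
    have hsj : 1/L ≤ s j := hs j hj
    have hsj0 : 0 < s j := lt_of_lt_of_le (by positivity) hsj
    rcases Nat.eq_zero_or_pos (ι0 j) with h0 | h0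
    · rw [hg]; dsimp only; rw [h0]; simp only [if_pos rfl]
      rw [show (1:ℝ)/4^r = (1/4)^r by rw [div_pow, one_pow]]
      apply pow_le_pow_left₀ (by positivity)
      rw [div_le_div_iff₀ (by positivity) (by norm_num)]
      have : 1 ≤ L * s j := by
        have h' : L * (1/L) ≤ L * s j := mul_le_mul_of_nonneg_left hsj hL.le
        rwa [mul_one_div, div_self hL.ne'] at h'
      nlinarith
    · have hn : (1:ℝ) ≤ (ι0 j : ℝ) := by exact_mod_cast h0
      have hlow : (ι0 j : ℝ) * Δ ≤ s j := by
        have := hfl j hj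
        rw [le_div_iff₀ hΔ] at this
        have h1L : (0:ℝ) < 1/L := by positivity
        linarith
      have hnd0 : 0 < (ι0 j : ℝ) * Δ := by positivity
      rw [hg]; dsimp only
      rw [if_neg (Nat.pos_iff_ne_zero.mp h0)]
      have hb1 : (1/(4 * L^2 * s j^2))^r ≤ (1/(4 * L^2 * ((ι0 j:ℝ)*Δ)^2))^r := by
        apply pow_le_pow_left₀ (by positivity)
        apply div_le_div_of_nonneg_left (by norm_num) (by positivity)
        have : ((ι0 j:ℝ)*Δ)^2 ≤ s j ^2 := by nlinarith
        nlinarith [sq_nonneg L, hL]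
      have hb2 : (1/(4 * L^2 * ((ι0 j:ℝ)*Δ)^2))^r = c * ((1/((ι0 j:ℝ))^2))^r := by
        rw [hc, ← mul_pow]
        congr 1
        field_simp
      have hb3 : ((1:ℝ)/((ι0 j:ℝ))^2)^r ≤ (1/((ι0 j:ℝ))^2) := by
        have h1 : (0:ℝ) ≤ 1/((ι0 j:ℝ))^2 := by positivity
        have h2 : (1:ℝ)/((ι0 j:ℝ))^2 ≤ 1 := by
          rw [div_le_one (by positivity)]
          nlinarith
        calc ((1:ℝ)/((ι0 j:ℝ))^2)^r ≤ (1/((ι0 j:ℝ))^2)^1 :=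
              pow_le_pow_of_le_one h1 h2 hr
          _ = _ := pow_one _
      calc (1/(4 * L^2 * s j^2))^r ≤ c * ((1/((ι0 j:ℝ))^2))^r := by rw [← hb2]; exact hb1
        _ ≤ c * (1/((ι0 j:ℝ))^2) := mul_le_mul_of_nonneg_left hb3 hc0
  -- injectivity
  have hinj : ∀ j ∈ S, ∀ j' ∈ S, ι0 j = ι0 j' → j = j' := by
    intro j hj j' hj' he
    by_contra hne
    have h1 := hfl j hj
    have h2 := hfl2 j hj
    have h3 := hfl j' hj'
    have h4 := hfl2 j' hj'
    rw [he] at h1 h2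
    have hd := hsep j hj j' hj' hne
    have : |s j - s j'| < Δ := by
      rw [abs_lt]
      rw [div_lt_iff₀ hΔ] at h2 h4
      rw [le_div_iff₀ hΔ] at h1 h3
      constructor <;> nlinarith
    linarith
  calc ∑ j ∈ S, (1/(4 * L^2 * s j^2))^r ≤ ∑ j ∈ S, g (ι0 j) := Finset.sum_le_sum hterm
    _ = ∑ n ∈ S.image ι0, g n := (Finset.sum_image hinj).symm
    _ ≤ 1/4^r + c * 2 := by
        obtain ⟨B, hB⟩ := Finset.exists_nat_subset_range (S.image ι0)
        calc ∑ n ∈ S.image ι0, g n ≤ ∑ n ∈ Finset.range B, g n :=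
              Finset.sum_le_sum_of_subset_of_nonneg hB (fun n _ _ => hg0 n)
          _ ≤ 1/4^r + c * 2 := by
              have hsplit : ∀ n, g n = (if n = 0 then (1:ℝ)/4^r else 0)
                  + c * (if n = 0 then (0:ℝ) else 1/(n:ℝ)^2) := by
                intro n; rw [hg]; dsimp only; split <;> simp
              rw [Finset.sum_congr rfl (fun n _ => hsplit n), Finset.sum_add_distrib,
                ← Finset.mul_sum]
              have h1 : (∑ n ∈ Finset.range B, if n = 0 then (1:ℝ)/4^r else 0) ≤ 1/4^r := by
                rw [Finset.sum_ite_eq' (Finset.range B) 0 (fun _ => (1:ℝ)/4^r)]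
                split
                · exact le_refl _
                · positivity
              have h2 := sumsq B
              have := mul_le_mul_of_nonneg_left h2 hc0
              linarith

theorem stmt14 (ℓ r k : ℕ) (hℓ : 4 ≤ ℓ) (hr : 1 ≤ r) (Δ : ℝ) (hΔ : 0 < Δ)
    (f : Fin k → ℝ) (hf : ∀ j, f j ∈ Set.Ico (0 : ℝ) 1)
    (hsep : ∀ j j', j ≠ j' → Δ ≤ dw (f j) (f j'))
    (x : ℝ) (hx : x ∈ Set.Ico (0 : ℝ) 1)
    (hfar : ∀ j, 1 / (ℓ : ℝ) ≤ dw x (f j)) :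
    (∑ j, (fejer ℓ (x - f j)) ^ r) ≤
      2 / (4 : ℝ) ^ r + Real.pi ^ 2 / ((ℓ : ℝ) ^ (2 * r) * Δ ^ (2 * r)) := by
  classical
  have hL : (0:ℝ) < (ℓ:ℝ) := by
    have : (0:ℕ) < ℓ := by omega
    exact_mod_cast this
  set w : Fin k → ℝ := fun j => (x - f j) - round (x - f j) with hw
  have hniw : ∀ j, ni (x - f j) = |w j| := fun j => rfl
  have hfar' : ∀ j, 1/(ℓ:ℝ) ≤ |w j| := by
    intro j
    have := hfar j
    rwa [dw_eq_ni, hniw] at this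
  have hwne : ∀ j, w j ≠ 0 := by
    intro j h
    have := hfar' j
    rw [h, abs_zero] at this
    have : (0:ℝ) < 1/(ℓ:ℝ) := by positivity
    linarith
  have hsep' : ∀ j j', j ≠ j' → Δ ≤ |w j - w j'| := by
    intro j j' hne
    have h1 := hsep j j' hne
    rw [dw_eq_ni] at h1
    have h2 : f j - f j' = (w j' - w j) +
        ((round (x - f j') - round (x - f j) : ℤ) : ℝ) := by
      rw [hw]; push_cast; ring
    rw [h2, ni_add_int] at h1
    calc Δ ≤ ni (w j' - w j) := h1
      _ ≤ |w j' - w j| := ni_le_abs _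
      _ = |w j - w j'| := abs_sub_comm _ _
  -- pointwise bound
  have hterm : ∀ j, (fejer ℓ (x - f j)) ^ r ≤ (1/(4 * (ℓ:ℝ)^2 * (w j)^2))^r := by
    intro j
    apply pow_le_pow_left₀ (fejer_nonneg _ _)
    have hpos : 0 < ni (x - f j) := by
      rw [hniw]
      exact lt_of_lt_of_le (by positivity) (hfar' j)
    have := fejer_le ℓ (x - f j) hpos
    rwa [hniw, sq_abs] at this
  have hsum1 : (∑ j, (fejer ℓ (x - f j)) ^ r) ≤
      ∑ j, (1/(4 * (ℓ:ℝ)^2 * (w j)^2))^r :=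
    Finset.sum_le_sum (fun j _ => hterm j)
  set c : ℝ := (1/(4 * (ℓ:ℝ)^2 * Δ^2))^r with hc
  have hP : ∑ j ∈ Finset.univ.filter (fun j => 0 < w j),
      (1/(4 * (ℓ:ℝ)^2 * (w j)^2))^r ≤ 1/4^r + c * 2 := by
    apply key (ℓ:ℝ) Δ hL hΔ r hr _ w
    · intro j hj
      rw [Finset.mem_filter] at hj
      have := hfar' j
      rwa [abs_of_pos hj.2] at this
    · intro j hj j' hj' hne
      exact hsep' j j' hne
  have hN : ∑ j ∈ Finset.univ.filter (fun j => ¬ 0 < w j),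
      (1/(4 * (ℓ:ℝ)^2 * (w j)^2))^r ≤ 1/4^r + c * 2 := by
    have heq : ∀ j ∈ Finset.univ.filter (fun j : Fin k => ¬ 0 < w j),
        (1/(4 * (ℓ:ℝ)^2 * (w j)^2))^r = (1/(4 * (ℓ:ℝ)^2 * (-(w j))^2))^r := by
      intro j _
      rw [neg_sq]
    rw [Finset.sum_congr rfl heq]
    apply key (ℓ:ℝ) Δ hL hΔ r hr _ (fun j => -(w j))
    · intro j hj
      rw [Finset.mem_filter] at hj
      have hneg : w j < 0 := lt_of_le_of_ne (not_lt.mp hj.2) (hwne j)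
      have := hfar' j
      rwa [abs_of_neg hneg] at this
    · intro j hj j' hj' hne
      have := hsep' j j' hne
      calc Δ ≤ |w j - w j'| := this
        _ = |-(w j) - -(w j')| := by rw [← abs_neg]; congr 1; ring
  have hsplit := Finset.sum_filter_add_sum_filter_not Finset.univ
    (fun j : Fin k => 0 < w j) (fun j => (1/(4 * (ℓ:ℝ)^2 * (w j)^2))^r)
  have hsum2 : (∑ j, (1/(4 * (ℓ:ℝ)^2 * (w j)^2))^r) ≤ 2/4^r + c * 4 := by
    rw [← hsplit]
    have h24 : 2/(4:ℝ)^r = 1/4^r + 1/4^r := by ring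
    linarith
  -- final arithmetic
  have hfinal : c * 4 ≤ Real.pi ^ 2 / ((ℓ : ℝ) ^ (2 * r) * Δ ^ (2 * r)) := by
    have hD : (0:ℝ) < (ℓ : ℝ) ^ (2 * r) * Δ ^ (2 * r) := by positivity
    have hc1 : c = (1/4)^r * (1/((ℓ:ℝ)^2 * Δ^2))^r := by
      rw [hc, ← mul_pow]
      congr 1
      ring
    have hc2 : ((1:ℝ)/((ℓ:ℝ)^2 * Δ^2))^r = 1/((ℓ : ℝ) ^ (2 * r) * Δ ^ (2 * r)) := by
      rw [div_pow, one_pow, mul_pow, pow_mul, pow_mul]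
    have h4 : (4:ℝ) * (1/4)^r ≤ 1 := by
      have : ((1:ℝ)/4)^r ≤ (1/4)^1 := pow_le_pow_of_le_one (by norm_num) (by norm_num) hr
      rw [pow_one] at this
      linarith
    have hπ : (1:ℝ) ≤ Real.pi ^ 2 := by nlinarith [Real.pi_gt_three]
    calc c * 4 = (4 * (1/4)^r) * (1/((ℓ : ℝ) ^ (2 * r) * Δ ^ (2 * r))) := by
          rw [hc1, hc2]; ring
      _ ≤ 1 * (1/((ℓ : ℝ) ^ (2 * r) * Δ ^ (2 * r))) := by
          apply mul_le_mul_of_nonneg_right h4 (by positivity)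
      _ ≤ Real.pi ^ 2 * (1/((ℓ : ℝ) ^ (2 * r) * Δ ^ (2 * r))) := by
          apply mul_le_mul_of_nonneg_right hπ (by positivity)
      _ = Real.pi ^ 2 / ((ℓ : ℝ) ^ (2 * r) * Δ ^ (2 * r)) := by ring
  calc (∑ j, (fejer ℓ (x - f j)) ^ r) ≤ 2/4^r + c * 4 := le_trans hsum1 hsum2
    _ ≤ 2 / (4 : ℝ) ^ r + Real.pi ^ 2 / ((ℓ : ℝ) ^ (2 * r) * Δ ^ (2 * r)) := by
        linarith
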